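/- Let f, h ∈ L¹([0,∞)) and let U ⊆ (0,∞) be such that 2πU is a uniqueness set for the Laplace transform. If |𝓛f(u)| = |𝓛h(u)| for all u ∈ 2πU, then |𝓛f(s)| = |𝓛h(s)| for all s ≥ 0. -/

import Mathlib

open MeasureTheory

noncomputable def laplace (f : ℝ → ℂ) (s : ℂ) : ℂ :=
  ∫ y in Set.Ioi (0 : ℝ), f y * Complex.exp (-s * y)

open scoped Convolution ComplexConjugate

namespace LapAux

noncomputable abbrev L : ℂ →L[ℝ] ℂ →L[ℝ] ℂ := ContinuousLinearMap.mul ℝ ℂ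

lemma ae_ne_zero : ∀ᵐ t : ℝ, t ≠ (0 : ℝ) := by
  have : {t : ℝ | ¬ t ≠ 0} = {0} := by ext t; simp
  rw [ae_iff, this]; exact measure_singleton 0

lemma norm_exp_le (s : ℝ) (hs : 0 ≤ s) {y : ℝ} (hy : 0 ≤ y) :
    ‖Complex.exp (-(s : ℂ) * y)‖ ≤ 1 := by
  rw [Complex.norm_exp]
  have : ((-(s : ℂ) * y)).re = -(s * y) := by simp
  rw [this, Real.exp_le_one_iff]
  nlinarith

lemma integrable_weight {φ : ℝ → ℂ} (hφ : Integrable φ)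
    (hφ0 : ∀ x < (0:ℝ), φ x = 0) (s : ℝ) (hs : 0 ≤ s) :
    Integrable (fun y => φ y * Complex.exp (-(s : ℂ) * y)) := by
  refine hφ.mono ?_ ?_
  · exact hφ.aestronglyMeasurable.mul
      (Complex.continuous_exp.comp (by continuity)).aestronglyMeasurable
  · filter_upwards with y
    rcases lt_or_ge y 0 with hy | hy
    · simp [hφ0 y hy]
    · rw [norm_mul]
      calc ‖φ y‖ * ‖Complex.exp (-(s : ℂ) * y)‖ ≤ ‖φ y‖ * 1 :=
            mul_le_mul_of_nonneg_left (norm_exp_le s hs hy) (norm_nonneg _)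
        _ = ‖φ y‖ := mul_one _

/-- Laplace transform of a convolution of two functions supported on `[0, ∞)`. -/
lemma laplace_convolution {φ ψ : ℝ → ℂ} (hφ : Integrable φ) (hψ : Integrable ψ)
    (hφ0 : ∀ x < (0:ℝ), φ x = 0) (hψ0 : ∀ x < (0:ℝ), ψ x = 0) (s : ℝ) (hs : 0 ≤ s) :
    laplace (φ ⋆[L] ψ) s
      = (∫ y, φ y * Complex.exp (-(s : ℂ) * y)) * (∫ y, ψ y * Complex.exp (-(s : ℂ) * y)) := by
  set φs := fun y => φ y * Complex.exp (-(s : ℂ) * y) with hφs_def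
  set ψs := fun y => ψ y * Complex.exp (-(s : ℂ) * y) with hψs_def
  have hφs : Integrable φs := integrable_weight hφ hφ0 s hs
  have hψs : Integrable ψs := integrable_weight hψ hψ0 s hs
  -- pointwise: (φ ⋆ ψ) x * e^{-sx} = (φs ⋆ ψs) x
  have key : ∀ x : ℝ, (φ ⋆[L] ψ) x * Complex.exp (-(s : ℂ) * x) = (φs ⋆[L] ψs) x := by
    intro x
    rw [convolution_def, convolution_def, ← integral_mul_const]
    congr 1; funext t
    simp only [ContinuousLinearMap.mul_apply', hφs_def, hψs_def]
    have hexp : Complex.exp (-(s:ℂ) * t) * Complex.exp (-(s:ℂ) * ((x - t : ℝ) : ℂ))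
        = Complex.exp (-(s:ℂ) * x) := by
      rw [← Complex.exp_add]; congr 1; push_cast; ring
    rw [mul_mul_mul_comm, hexp]
  -- (φs ⋆ ψs) vanishes a.e. outside Ioi 0 pointwise for x ≤ 0
  have vanish : ∀ x : ℝ, x ∉ Set.Ioi (0:ℝ) → (φs ⋆[L] ψs) x = 0 := by
    intro x hx
    simp only [Set.mem_Ioi, not_lt] at hx
    rw [convolution_def]
    refine integral_eq_zero_of_ae ?_
    filter_upwards [ae_ne_zero] with t ht
    rcases lt_or_ge t 0 with h1 | h1
    · simp [hφs_def, hφ0 t h1]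
    · have h1' : 0 < t := lt_of_le_of_ne h1 (Ne.symm ht)
      have : x - t < 0 := by linarith
      simp [hψs_def, hψ0 _ this]
  calc laplace (φ ⋆[L] ψ) s
      = ∫ x in Set.Ioi (0:ℝ), (φs ⋆[L] ψs) x := by
        unfold laplace; exact setIntegral_congr_fun measurableSet_Ioi fun x _ => key x
    _ = ∫ x, (φs ⋆[L] ψs) x := setIntegral_eq_integral_of_forall_compl_eq_zero vanish
    _ = (∫ y, φs y) * (∫ y, ψs y) := by
        rw [integral_convolution L hφs hψs]; simp [ContinuousLinearMap.mul_apply']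

lemma indicator_zero (f : ℝ → ℂ) : ∀ x < (0:ℝ), (Set.Ici (0:ℝ)).indicator f x = 0 := by
  intro x hx
  exact Set.indicator_of_notMem (by simpa using not_le.mpr hx) f

lemma integral_indicator_weight (f : ℝ → ℂ) (s : ℝ) :
    (∫ y, (Set.Ici (0:ℝ)).indicator f y * Complex.exp (-(s : ℂ) * y)) = laplace f s := by
  have : (fun y => (Set.Ici (0:ℝ)).indicator f y * Complex.exp (-(s : ℂ) * y))
      = (Set.Ici (0:ℝ)).indicator (fun y => f y * Complex.exp (-(s : ℂ) * y)) := by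
    funext y
    by_cases hy : y ∈ Set.Ici (0:ℝ) <;>
      simp [Set.indicator_of_mem, Set.indicator_of_notMem, hy]
  rw [this, integral_indicator measurableSet_Ici, integral_Ici_eq_integral_Ioi]
  rfl

lemma integral_indicator_conj_weight (f : ℝ → ℂ) (s : ℝ) :
    (∫ y, conj ((Set.Ici (0:ℝ)).indicator f y) * Complex.exp (-(s : ℂ) * y))
      = conj (laplace f s) := by
  rw [← integral_indicator_weight f s, ← integral_conj]
  congr 1; funext y
  rw [map_mul]
  congr 1
  rw [← Complex.exp_conj]
  congr 1
  simp

end LapAux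

open LapAux in
theorem abs_laplace_extends (f h : ℝ → ℂ)
    (hf : IntegrableOn f (Set.Ici 0)) (hh : IntegrableOn h (Set.Ici 0))
    (U : Set ℝ) (hU : U ⊆ Set.Ioi 0)
    (huniq : ∀ g : ℝ → ℂ, IntegrableOn g (Set.Ici 0) →
      (∀ u ∈ U, laplace g ((2 * Real.pi * u : ℝ) : ℂ) = 0) →
      ∀ᵐ y ∂(volume.restrict (Set.Ici (0 : ℝ))), g y = 0)
    (heq : ∀ u ∈ U, ‖laplace f ((2 * Real.pi * u : ℝ) : ℂ)‖
      = ‖laplace h ((2 * Real.pi * u : ℝ) : ℂ)‖) :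
    ∀ s : ℝ, 0 ≤ s →
      ‖laplace f (s : ℂ)‖ = ‖laplace h (s : ℂ)‖ := by
  classical
  set F : ℝ → ℂ := (Set.Ici (0:ℝ)).indicator f with hF_def
  set H : ℝ → ℂ := (Set.Ici (0:ℝ)).indicator h with hH_def
  set Fc : ℝ → ℂ := fun t => conj (F t) with hFc_def
  set Hc : ℝ → ℂ := fun t => conj (H t) with hHc_def
  have hFi : Integrable F := (integrable_indicator_iff measurableSet_Ici).mpr hf
  have hHi : Integrable H := (integrable_indicator_iff measurableSet_Ici).mpr hh
  have hFci : Integrable Fc := by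
    refine hFi.mono (Complex.continuous_conj.comp_aestronglyMeasurable
      hFi.aestronglyMeasurable) ?_
    filter_upwards with y; simp [hFc_def]
  have hHci : Integrable Hc := by
    refine hHi.mono (Complex.continuous_conj.comp_aestronglyMeasurable
      hHi.aestronglyMeasurable) ?_
    filter_upwards with y; simp [hHc_def]
  have hF0 : ∀ x < (0:ℝ), F x = 0 := indicator_zero f
  have hH0 : ∀ x < (0:ℝ), H x = 0 := indicator_zero h
  have hFc0 : ∀ x < (0:ℝ), Fc x = 0 := fun x hx => by simp [hFc_def, hF0 x hx]
  have hHc0 : ∀ x < (0:ℝ), Hc x = 0 := fun x hx => by simp [hHc_def, hH0 x hx]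
  set g : ℝ → ℂ := fun x => (F ⋆[L] Fc) x - (H ⋆[L] Hc) x with hg_def
  have hgi : Integrable g :=
    (hFi.integrable_convolution L hFci).sub (hHi.integrable_convolution L hHci)
  -- key identity for laplace g
  have key : ∀ t : ℝ, 0 ≤ t →
      laplace g t = laplace f t * conj (laplace f t) - laplace h t * conj (laplace h t) := by
    intro t ht
    have h1 : laplace (F ⋆[L] Fc) t = laplace f t * conj (laplace f t) := by
      rw [laplace_convolution hFi hFci hF0 hFc0 t ht, integral_indicator_weight,
        integral_indicator_conj_weight]
    have h2 : laplace (H ⋆[L] Hc) t = laplace h t * conj (laplace h t) := by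
      rw [laplace_convolution hHi hHci hH0 hHc0 t ht, integral_indicator_weight,
        integral_indicator_conj_weight]
    have hint1 : IntegrableOn (fun x => (F ⋆[L] Fc) x * Complex.exp (-(t:ℂ) * x))
        (Set.Ioi (0:ℝ)) :=
      (integrable_weight (hFi.integrable_convolution L hFci)
        (fun x hx => by
          rw [convolution_def]
          refine integral_eq_zero_of_ae ?_
          filter_upwards [ae_ne_zero] with y hy
          rcases lt_or_ge y 0 with h1' | h1'
          · simp [hF0 y h1']
          · have hneg : x - y < 0 := by
              rcases lt_or_eq_of_le h1' with h2' | h2'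
              · linarith
              · exact absurd h2'.symm hy
            simp [hFc0 _ hneg]) t ht).integrableOn
    have hint2 : IntegrableOn (fun x => (H ⋆[L] Hc) x * Complex.exp (-(t:ℂ) * x))
        (Set.Ioi (0:ℝ)) :=
      (integrable_weight (hHi.integrable_convolution L hHci)
        (fun x hx => by
          rw [convolution_def]
          refine integral_eq_zero_of_ae ?_
          filter_upwards [ae_ne_zero] with y hy
          rcases lt_or_ge y 0 with h1' | h1'
          · simp [hH0 y h1']
          · have hneg : x - y < 0 := by
              rcases lt_or_eq_of_le h1' with h2' | h2'
              · linarith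
              · exact absurd h2'.symm hy
            simp [hHc0 _ hneg]) t ht).integrableOn
    have : laplace g t = laplace (F ⋆[L] Fc) t - laplace (H ⋆[L] Hc) t := by
      unfold laplace
      rw [← integral_sub hint1 hint2]
      congr 1; funext x; simp [hg_def]; ring
    rw [this, h1, h2]
  -- laplace g vanishes on 2πU
  have hvanish : ∀ u ∈ U, laplace g ((2 * Real.pi * u : ℝ) : ℂ) = 0 := by
    intro u hu
    have hu' : (0:ℝ) < u := hU hu
    have hpos : (0:ℝ) ≤ 2 * Real.pi * u := by positivity
    rw [key _ hpos, Complex.mul_conj, Complex.mul_conj, Complex.normSq_eq_norm_sq,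
      Complex.normSq_eq_norm_sq, heq u hu, sub_self]
  have hae := huniq g hgi.integrableOn hvanish
  intro s hs
  have hzero : laplace g (s : ℂ) = 0 := by
    unfold laplace
    refine integral_eq_zero_of_ae ?_
    have hae' : ∀ᵐ y ∂(volume.restrict (Set.Ioi (0:ℝ))), g y = 0 :=
      ae_restrict_of_ae_restrict_of_subset Set.Ioi_subset_Ici_self hae
    filter_upwards [hae'] with y hy
    simp [hy]
  have := key s hs
  rw [hzero, Complex.mul_conj, Complex.mul_conj, Complex.normSq_eq_norm_sq,
    Complex.normSq_eq_norm_sq] at this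
  have h2 : (‖laplace f (s:ℂ)‖)^2 = (‖laplace h (s:ℂ)‖)^2 := by
    exact_mod_cast sub_eq_zero.mp this.symm
  nlinarith [norm_nonneg (laplace f (s:ℂ)), norm_nonneg (laplace h (s:ℂ)), h2]
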